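/- arXiv:2303.12228 — 2 statements merged into one kernel-verified Lean document; each statement's English description precedes it below -/
import Mathlib

section
/- Let $\{U_i\}_{i\ge 1}$ be i.i.d. uniform on $[0,1]$ and $\delta' \in (0,1)$. Then $V_n(\delta')/n^{1/2} = \frac{1}{n^{1/2}}\sum_{i=n-\lfloor\delta'n\rfloor+1}^{n} \mathbf{1}_{\{U_i \le i^{-1/2}\}}$ converges in probability to $2 - 2(1-\delta')^{1/2}$ as $n \to \infty$. -/
open MeasureTheory ProbabilityTheory Filter Topology
open scoped Classical

/-- telescoping sum -/
lemma my_tele (f : ℕ → ℝ) (a n : ℕ) (h : a ≤ n) :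
    ∑ i ∈ Finset.Icc (a + 1) n, (f i - f (i - 1)) = f n - f a := by
  induction n, h using Nat.le_induction with
  | base => rw [Finset.Icc_eq_empty (by omega)]; simp
  | succ n hn ih =>
      rw [Finset.sum_Icc_succ_top (by omega), ih]
      simp only [Nat.add_sub_cancel]
      ring

lemma my_p_eq (i : ℕ) (hi : 1 ≤ i) :
    (i : ℝ) ^ (-(1:ℝ)/2) = (Real.sqrt i)⁻¹ := by
  have h0 : (0:ℝ) ≤ i := Nat.cast_nonneg i
  rw [show (-(1:ℝ)/2) = -(1/2) by norm_num, Real.rpow_neg h0, ← Real.sqrt_eq_rpow]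

lemma my_upper (i : ℕ) (hi : 1 ≤ i) :
    (i : ℝ) ^ (-(1:ℝ)/2) ≤ 2 * Real.sqrt i - 2 * Real.sqrt (i - 1 : ℕ) := by
  rw [my_p_eq i hi]
  have h1 : (1:ℝ) ≤ (i:ℝ) := by exact_mod_cast hi
  set s := Real.sqrt i with hs
  set t := Real.sqrt (i - 1 : ℕ) with ht
  have hs1 : 1 ≤ s := Real.one_le_sqrt.2 h1
  have ht0 : 0 ≤ t := Real.sqrt_nonneg _
  have hs2 : s ^ 2 = (i:ℝ) := Real.sq_sqrt (by linarith)
  have ht2 : t ^ 2 = (i:ℝ) - 1 := by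
    rw [ht, Real.sq_sqrt (Nat.cast_nonneg _)]
    push_cast [Nat.cast_sub hi]
    ring
  have hkey : 1 ≤ s * (2 * s - 2 * t) := by nlinarith [sq_nonneg (s - t)]
  rw [inv_le_iff_one_le_mul₀ (by linarith)]
  nlinarith

lemma my_lower (i : ℕ) (hi : 1 ≤ i) :
    2 * Real.sqrt ((i:ℕ) + 1 : ℕ) - 2 * Real.sqrt i ≤ (i : ℝ) ^ (-(1:ℝ)/2) := by
  rw [my_p_eq i hi]
  have h1 : (1:ℝ) ≤ (i:ℝ) := by exact_mod_cast hi
  set s := Real.sqrt i with hs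
  set t := Real.sqrt ((i:ℕ) + 1 : ℕ) with ht
  have hs1 : 1 ≤ s := Real.one_le_sqrt.2 h1
  have ht0 : 0 ≤ t := Real.sqrt_nonneg _
  have hs2 : s ^ 2 = (i:ℝ) := Real.sq_sqrt (by linarith)
  have ht2 : t ^ 2 = (i:ℝ) + 1 := by
    rw [ht, Real.sq_sqrt (Nat.cast_nonneg _)]
    push_cast
    ring
  have hkey : s * (2 * t - 2 * s) ≤ 1 := by nlinarith [sq_nonneg (s - t)]
  have hsp : (0:ℝ) < s := by linarith
  calc 2 * t - 2 * s = s * (2 * t - 2 * s) / s := by field_simp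
    _ ≤ 1 / s := by gcongr
    _ = s⁻¹ := one_div s

theorem stmt4
    {Ω : Type*} [MeasurableSpace Ω] (μ : Measure Ω) [IsProbabilityMeasure μ]
    (U : ℕ → Ω → ℝ)
    (hUmeas : ∀ i, Measurable (U i))
    (hUindep : iIndepFun (fun i : ℕ => U (i + 1)) μ)
    (hUunif : ∀ i : ℕ, 1 ≤ i →
      Measure.map (U i) μ = MeasureTheory.volume.restrict (Set.Icc (0:ℝ) 1))
    (δ' : ℝ) (hδ' : δ' ∈ Set.Ioo (0:ℝ) 1)
    (V : ℕ → Ω → ℝ)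
    (hV : ∀ n ω, V n ω =
      ∑ i ∈ Finset.Icc (n - ⌊δ' * (n:ℝ)⌋₊ + 1) n,
        if U i ω ≤ (i:ℝ) ^ (-(1:ℝ)/2) then (1:ℝ) else 0) :
    ∀ ε : ℝ, 0 < ε →
      Tendsto
        (fun n : ℕ =>
          μ {ω | ε < |V n ω / Real.sqrt n - (2 - 2 * Real.sqrt (1 - δ'))|})
        atTop (𝓝 0) := by
  obtain ⟨hδ0, hδ1⟩ := hδ'
  set m : ℝ := 2 - 2 * Real.sqrt (1 - δ') with hm
  set a : ℕ → ℕ := fun n => n - ⌊δ' * (n:ℝ)⌋₊ with ha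
  set p : ℕ → ℝ := fun i => (i:ℝ) ^ (-(1:ℝ)/2) with hp
  set S : ℕ → Set Ω := fun i => (U i) ⁻¹' (Set.Iic (p i)) with hS
  have hSmeas : ∀ i, MeasurableSet (S i) := fun i => (hUmeas i) measurableSet_Iic
  set X : ℕ → Ω → ℝ := fun i => (S i).indicator (fun _ => 1) with hX
  have hXdef : ∀ i ω, X i ω = if U i ω ≤ p i then (1:ℝ) else 0 := by
    intro i ω
    simp [hX, Set.indicator_apply, hS, Set.mem_preimage, Set.mem_Iic]
  have hVsum : ∀ n, V n = ∑ i ∈ Finset.Icc (a n + 1) n, X i := by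
    intro n
    funext ω
    rw [hV, Finset.sum_apply]
    exact Finset.sum_congr rfl fun i _ => (hXdef i ω).symm
  have hp_eq : ∀ i, 1 ≤ i → p i = (Real.sqrt i)⁻¹ := fun i hi => my_p_eq i hi
  have hp_pos : ∀ i, 1 ≤ i → 0 < p i := by
    intro i hi
    rw [hp_eq i hi]
    have : (0:ℝ) < Real.sqrt i := Real.sqrt_pos.2 (by exact_mod_cast hi)
    positivity
  have hp_le_one : ∀ i, 1 ≤ i → p i ≤ 1 := by
    intro i hi
    rw [hp_eq i hi]
    have h1 : (1:ℝ) ≤ Real.sqrt i := Real.one_le_sqrt.2 (by exact_mod_cast hi)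
    exact inv_le_one_of_one_le₀ h1
  have hmu : ∀ i, 1 ≤ i → μ (S i) = ENNReal.ofReal (p i) := by
    intro i hi
    rw [hS]
    simp only
    rw [← Measure.map_apply (hUmeas i) measurableSet_Iic, hUunif i hi,
      Measure.restrict_apply measurableSet_Iic]
    have : Set.Iic (p i) ∩ Set.Icc (0:ℝ) 1 = Set.Icc 0 (p i) := by
      ext x
      simp only [Set.mem_inter_iff, Set.mem_Iic, Set.mem_Icc]
      constructor
      · rintro ⟨h1, h2, _⟩; exact ⟨h2, h1⟩
      · rintro ⟨h1, h2⟩; exact ⟨h2, h1, h2.trans (hp_le_one i hi)⟩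
    rw [this, Real.volume_Icc, sub_zero]
  have hEX : ∀ i, 1 ≤ i → μ[X i] = p i := by
    intro i hi
    rw [hX]
    simp only
    rw [integral_indicator_const (1:ℝ) (hSmeas i), measureReal_def, hmu i hi, smul_eq_mul, mul_one,
      ENNReal.toReal_ofReal (hp_pos i hi).le]
  have hX2 : ∀ i, MemLp (X i) 2 μ := fun i =>
    memLp_indicator_const 2 (hSmeas i) 1 (Or.inr (measure_ne_top μ _))
  have hXsq : ∀ i, X i ^ 2 = X i := by
    intro i
    funext ω
    by_cases h : ω ∈ S i <;> simp [hX, Set.indicator_apply, h]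
  have hvar : ∀ i, 1 ≤ i → variance (X i) μ ≤ p i := by
    intro i hi
    rw [variance_eq_sub (hX2 i), hXsq, hEX i hi]
    nlinarith [sq_nonneg (p i)]
  have hindep : ∀ i j, 1 ≤ i → 1 ≤ j → i ≠ j → IndepFun (X i) (X j) μ := by
    intro i j hi hj hij
    have hU : IndepFun (U i) (U j) μ := by
      have h := hUindep.indepFun (show i - 1 ≠ j - 1 by omega)
      rwa [Nat.sub_add_cancel hi, Nat.sub_add_cancel hj] at h
    have hXi : X i = (Set.Iic (p i)).indicator (fun _ => (1:ℝ)) ∘ U i := by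
      funext ω; simp [hX, hS, Set.indicator_apply, Function.comp]
    have hXj : X j = (Set.Iic (p j)).indicator (fun _ => (1:ℝ)) ∘ U j := by
      funext ω; simp [hX, hS, Set.indicator_apply, Function.comp]
    rw [hXi, hXj]
    exact hU.comp (measurable_const.indicator measurableSet_Iic)
      (measurable_const.indicator measurableSet_Iic)
  have hVmean : ∀ n, μ[V n] = ∑ i ∈ Finset.Icc (a n + 1) n, p i := by
    intro n
    rw [hVsum]
    simp only [Finset.sum_apply]
    rw [integral_finset_sum _ fun i _ => (hX2 i).integrable one_le_two]
    exact Finset.sum_congr rfl fun i hi =>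
      hEX i (by have := (Finset.mem_Icc.1 hi).1; omega)
  have hVvar : ∀ n, variance (V n) μ ≤ ∑ i ∈ Finset.Icc (a n + 1) n, p i := by
    intro n
    rw [hVsum, IndepFun.variance_sum (fun i _ => hX2 i)
      (fun i hi j hj hij => hindep i j
        (by have := (Finset.mem_Icc.1 (Finset.mem_coe.1 hi)).1; omega)
        (by have := (Finset.mem_Icc.1 (Finset.mem_coe.1 hj)).1; omega) hij)]
    exact Finset.sum_le_sum fun i hi => hvar i
      (by have := (Finset.mem_Icc.1 hi).1; omega)
  have ha_le : ∀ n, a n ≤ n := fun n => Nat.sub_le _ _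
  have hsum_ub : ∀ n, ∑ i ∈ Finset.Icc (a n + 1) n, p i
      ≤ 2 * Real.sqrt n - 2 * Real.sqrt (a n) := by
    intro n
    calc ∑ i ∈ Finset.Icc (a n + 1) n, p i
        ≤ ∑ i ∈ Finset.Icc (a n + 1) n,
            ((fun k : ℕ => 2 * Real.sqrt k) i - (fun k : ℕ => 2 * Real.sqrt k) (i - 1)) :=
          Finset.sum_le_sum fun i hi =>
            my_upper i (by have := (Finset.mem_Icc.1 hi).1; omega)
      _ = 2 * Real.sqrt n - 2 * Real.sqrt (a n) :=
          my_tele (fun k : ℕ => 2 * Real.sqrt k) (a n) n (ha_le n)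
  have hsum_lb : ∀ n, 2 * Real.sqrt ((n:ℕ) + 1 : ℕ) - 2 * Real.sqrt ((a n : ℕ) + 1 : ℕ)
      ≤ ∑ i ∈ Finset.Icc (a n + 1) n, p i := by
    intro n
    have htel := my_tele (fun k : ℕ => 2 * Real.sqrt (k + 1 : ℕ)) (a n) n (ha_le n)
    calc 2 * Real.sqrt ((n:ℕ) + 1 : ℕ) - 2 * Real.sqrt ((a n : ℕ) + 1 : ℕ)
        = ∑ i ∈ Finset.Icc (a n + 1) n,
            ((fun k : ℕ => 2 * Real.sqrt (k + 1 : ℕ)) i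
              - (fun k : ℕ => 2 * Real.sqrt (k + 1 : ℕ)) (i - 1)) := htel.symm
      _ ≤ ∑ i ∈ Finset.Icc (a n + 1) n, p i := by
          apply Finset.sum_le_sum
          intro i hi
          have hi1 : 1 ≤ i := by have := (Finset.mem_Icc.1 hi).1; omega
          have h1 : i - 1 + 1 = i := by omega
          simp only [h1]
          exact my_lower i hi1
  have hfloor_le : ∀ n : ℕ, ⌊δ' * (n:ℝ)⌋₊ ≤ n := by
    intro n
    have h : δ' * n ≤ (n:ℝ) := by nlinarith [Nat.cast_nonneg (α := ℝ) n]
    calc ⌊δ' * (n:ℝ)⌋₊ ≤ ⌊(n:ℝ)⌋₊ := Nat.floor_le_floor h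
      _ = n := Nat.floor_natCast n
  have hacast : ∀ n : ℕ, (a n : ℝ) = (n:ℝ) - (⌊δ' * (n:ℝ)⌋₊ : ℝ) := by
    intro n
    rw [ha]
    simp only
    rw [Nat.cast_sub (hfloor_le n)]
  have hratio : Tendsto (fun n : ℕ => (a n : ℝ) / n) atTop (𝓝 (1 - δ')) := by
    have hup : Tendsto (fun n : ℕ => (⌊δ' * (n:ℝ)⌋₊ : ℝ) / n) atTop (𝓝 δ') := by
      apply tendsto_of_tendsto_of_tendsto_of_le_of_le'
        (g := fun n : ℕ => δ' - 1/(n:ℝ)) (h := fun _ => δ')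
      · simpa using (tendsto_const_nhds : Tendsto (fun _ : ℕ => δ') atTop (𝓝 δ')).sub
          tendsto_one_div_atTop_nhds_zero_nat
      · exact tendsto_const_nhds
      · filter_upwards [eventually_ge_atTop 1] with n hn
        have hn0 : (0:ℝ) < n := by exact_mod_cast hn
        have h1 : δ' * n - 1 ≤ (⌊δ' * (n:ℝ)⌋₊ : ℝ) := (Nat.sub_one_lt_floor _).le
        calc δ' - 1/(n:ℝ) = (δ' * n - 1)/n := by field_simp
          _ ≤ (⌊δ' * (n:ℝ)⌋₊ : ℝ)/n := by gcongr
      · filter_upwards [eventually_ge_atTop 1] with n hn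
        have hn0 : (0:ℝ) < n := by exact_mod_cast hn
        rw [div_le_iff₀ hn0]
        exact Nat.floor_le (by positivity)
    have h2 : Tendsto (fun n : ℕ => 1 - (⌊δ' * (n:ℝ)⌋₊ : ℝ)/n) atTop (𝓝 (1 - δ')) :=
      tendsto_const_nhds.sub hup
    apply h2.congr'
    filter_upwards [eventually_ge_atTop 1] with n hn
    have hn0 : (0:ℝ) < n := by exact_mod_cast hn
    rw [hacast n, sub_div, div_self hn0.ne']
  have honov : Tendsto (fun n : ℕ => 1/(n:ℝ)) atTop (𝓝 0) :=
    tendsto_one_div_atTop_nhds_zero_nat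
  have hratio1 : Tendsto (fun n : ℕ => ((a n : ℝ) + 1) / n) atTop (𝓝 (1 - δ')) := by
    have := hratio.add honov
    rw [add_zero] at this
    apply this.congr
    intro n
    rw [add_div]
  have hratio2 : Tendsto (fun n : ℕ => ((n : ℝ) + 1) / n) atTop (𝓝 1) := by
    have h2 : Tendsto (fun n : ℕ => (n:ℝ)/n + 1/(n:ℝ)) atTop (𝓝 1) := by
      have hone : Tendsto (fun n : ℕ => (n:ℝ)/n) atTop (𝓝 1) := by
        apply tendsto_const_nhds.congr'
        filter_upwards [eventually_ge_atTop 1] with n hn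
        have hn0 : (0:ℝ) < n := by exact_mod_cast hn
        rw [div_self hn0.ne']
      simpa using hone.add honov
    apply h2.congr
    intro n
    rw [add_div]
  have hmean : Tendsto (fun n : ℕ => μ[V n] / Real.sqrt n) atTop (𝓝 m) := by
    apply tendsto_of_tendsto_of_tendsto_of_le_of_le'
      (g := fun n : ℕ => 2 * Real.sqrt (((n:ℝ)+1)/n) - 2 * Real.sqrt (((a n : ℝ)+1)/n))
      (h := fun n : ℕ => 2 - 2 * Real.sqrt ((a n : ℝ)/n))
    · have h1 : Tendsto (fun n : ℕ => Real.sqrt (((n:ℝ)+1)/n)) atTop (𝓝 1) := by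
        have h := (Real.continuous_sqrt.tendsto 1).comp hratio2
        rw [Real.sqrt_one] at h
        exact h
      have h2 : Tendsto (fun n : ℕ => Real.sqrt (((a n : ℝ)+1)/n)) atTop
          (𝓝 (Real.sqrt (1 - δ'))) := (Real.continuous_sqrt.tendsto _).comp hratio1
      have hg := ((tendsto_const_nhds (x := (2:ℝ))).mul h1).sub
        ((tendsto_const_nhds (x := (2:ℝ))).mul h2)
      simpa [hm] using hg
    · have h2 : Tendsto (fun n : ℕ => Real.sqrt ((a n : ℝ)/n)) atTop
          (𝓝 (Real.sqrt (1 - δ'))) := (Real.continuous_sqrt.tendsto _).comp hratio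
      have hg := (tendsto_const_nhds (x := (2:ℝ))).sub
        ((tendsto_const_nhds (x := (2:ℝ))).mul h2)
      simpa [hm] using hg
    · filter_upwards [eventually_ge_atTop 1] with n hn
      have hn0 : (0:ℝ) < n := by exact_mod_cast hn
      have hsn : (0:ℝ) < Real.sqrt n := Real.sqrt_pos.2 hn0
      have hlb := (hsum_lb n).trans_eq (hVmean n).symm
      have key : 2 * Real.sqrt (((n:ℝ)+1)/n) - 2 * Real.sqrt (((a n : ℝ)+1)/n)
          = (2 * Real.sqrt (((n:ℕ)+1 : ℕ)) - 2 * Real.sqrt (((a n : ℕ)+1 : ℕ))) / Real.sqrt n := by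
        rw [Real.sqrt_div (by positivity), Real.sqrt_div (by positivity)]
        push_cast
        field_simp
      rw [key]
      gcongr
    · filter_upwards [eventually_ge_atTop 1] with n hn
      have hn0 : (0:ℝ) < n := by exact_mod_cast hn
      have hsn : (0:ℝ) < Real.sqrt n := Real.sqrt_pos.2 hn0
      have hub := (hVmean n).trans_le (hsum_ub n)
      have key : 2 - 2 * Real.sqrt ((a n : ℝ)/n)
          = (2 * Real.sqrt n - 2 * Real.sqrt (a n)) / Real.sqrt n := by
        rw [Real.sqrt_div (by positivity)]
        field_simp
      rw [key]
      gcongr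
  have hvarb : ∀ n : ℕ, variance (V n) μ ≤ 2 * Real.sqrt n := by
    intro n
    calc variance (V n) μ ≤ ∑ i ∈ Finset.Icc (a n + 1) n, p i := hVvar n
      _ ≤ 2 * Real.sqrt n - 2 * Real.sqrt (a n) := hsum_ub n
      _ ≤ 2 * Real.sqrt n := by nlinarith [Real.sqrt_nonneg ((a n : ℝ))]
  have hVmem : ∀ n, MemLp (V n) 2 μ := by
    intro n
    rw [hVsum]
    exact memLp_finset_sum' _ fun i _ => hX2 i
  intro ε hε
  have hB : Tendsto
      (fun n : ℕ => ENNReal.ofReal ((2 * Real.sqrt n) / (ε/2 * Real.sqrt n)^2))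
      atTop (𝓝 0) := by
    have hr : Tendsto (fun n : ℕ => (2 * Real.sqrt n) / (ε/2 * Real.sqrt n)^2)
        atTop (𝓝 0) := by
      have hsi : Tendsto (fun n : ℕ => (Real.sqrt n)⁻¹) atTop (𝓝 0) := by
        have h0 : Tendsto (fun n : ℕ => Real.sqrt ((n:ℝ)⁻¹)) atTop (𝓝 0) := by
          have h := (Real.continuous_sqrt.tendsto 0).comp
            tendsto_inv_atTop_nhds_zero_nat
          rw [Real.sqrt_zero] at h
          exact h
        apply h0.congr
        intro n
        rw [Real.sqrt_inv]
      have h8 : Tendsto (fun n : ℕ => (8/ε^2) * (Real.sqrt n)⁻¹) atTop (𝓝 0) := by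
        simpa using (tendsto_const_nhds (x := (8/ε^2 : ℝ))).mul hsi
      apply h8.congr'
      filter_upwards [eventually_ge_atTop 1] with n hn
      have hn0 : (0:ℝ) < n := by exact_mod_cast hn
      have hsn : (0:ℝ) < Real.sqrt n := Real.sqrt_pos.2 hn0
      have hsq : (Real.sqrt n)^2 = (n:ℝ) := Real.sq_sqrt hn0.le
      rw [mul_pow, div_pow]
      field_simp
      nlinarith [hsq]
    simpa using ENNReal.tendsto_ofReal hr
  have hev : ∀ᶠ n in atTop,
      μ {ω | ε < |V n ω / Real.sqrt n - m|}
        ≤ ENNReal.ofReal ((2 * Real.sqrt n) / (ε/2 * Real.sqrt n)^2) := by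
    have hmean' : ∀ᶠ n : ℕ in atTop, |μ[V n] / Real.sqrt (n:ℝ) - m| < ε/2 := by
      have h := hmean (Metric.ball_mem_nhds m (show (0:ℝ) < ε/2 by positivity))
      filter_upwards [h] with n hn
      rw [Set.mem_preimage, Metric.mem_ball, Real.dist_eq] at hn
      exact hn
    filter_upwards [hmean', eventually_ge_atTop 1] with n hn1 hn2
    have hn0 : (0:ℝ) < n := by exact_mod_cast hn2
    have hsn : (0:ℝ) < Real.sqrt n := Real.sqrt_pos.2 hn0
    set c : ℝ := ε/2 * Real.sqrt n with hc
    have hcpos : 0 < c := by positivity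
    have hsub : {ω | ε < |V n ω / Real.sqrt n - m|}
        ⊆ {ω | c ≤ |V n ω - μ[V n]|} := by
      intro ω hω
      simp only [Set.mem_setOf_eq] at hω ⊢
      by_contra hcon
      push_neg at hcon
      have hdec : V n ω / Real.sqrt n - m
          = (V n ω - μ[V n]) / Real.sqrt n + (μ[V n] / Real.sqrt n - m) := by
        field_simp
        ring
      have habs : |V n ω / Real.sqrt n - m|
          ≤ |V n ω - μ[V n]| / Real.sqrt n + |μ[V n] / Real.sqrt n - m| := by
        rw [hdec]
        refine (abs_add_le _ _).trans_eq ?_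
        rw [abs_div, abs_of_pos hsn]
      have h3 : |V n ω - μ[V n]| / Real.sqrt n < ε/2 := by
        rw [div_lt_iff₀ hsn]
        calc |V n ω - μ[V n]| < c := hcon
          _ = ε/2 * Real.sqrt n := hc
      linarith
    calc μ {ω | ε < |V n ω / Real.sqrt n - m|}
        ≤ μ {ω | c ≤ |V n ω - μ[V n]|} := measure_mono hsub
      _ ≤ ENNReal.ofReal (variance (V n) μ / c^2) :=
          meas_ge_le_variance_div_sq (hVmem n) hcpos
      _ ≤ ENNReal.ofReal ((2 * Real.sqrt n) / c^2) := by
          apply ENNReal.ofReal_le_ofReal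
          gcongr
          exact hvarb n
  apply tendsto_of_tendsto_of_tendsto_of_le_of_le'
    (g := fun _ : ℕ => (0:ENNReal)) tendsto_const_nhds hB
    (Eventually.of_forall fun n => zero_le) hev
end

section
/- Let $\{U_i\}_{i\ge 1}$ be i.i.d. uniform on $[0,1]$ and fix $\varepsilon \in (0,1)$. Let $k = \lceil \log^2 n \rceil$. Define $A_{n,k}$ as the number of indices $j$ among the first (at most $n$) inter-arrival gaps $\Delta N_j$ of the process of successes $\{U_i \le i^{-1/2}\}$ after time $n^\varepsilon$ that satisfy $\Delta N_j \le k$. Then $\mathbb{P}[A_{n,k} > n^{1-\varepsilon/4}] \le \left(\frac{3 e k}{2 n^{\varepsilon/4}}\right)^{n^{1-\varepsilon/4}}$, and in particular $\sum_n \mathbb{P}[A_{n,\lceil\log^2 n\rceil} > n^{1-\varepsilon/4}] < \infty$. -/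
set_option linter.unusedSectionVars false
set_option linter.unusedVariables false

open MeasureTheory ProbabilityTheory Filter Topology
open scoped Classical ENNReal

namespace Stmt18Aux

variable {Ω : Type*} [MeasurableSpace Ω]

def succ (U : ℕ → Ω → ℝ) (m : ℕ) (ω : Ω) : Prop := U m ω ≤ (m:ℝ) ^ (-(1:ℝ)/2)

noncomputable def rr (m : ℕ) : ℝ := (m:ℝ) ^ (-(1:ℝ)/2)

lemma succ_iff (U : ℕ → Ω → ℝ) (m : ℕ) (ω : Ω) :
    succ U m ω ↔ U m ω ∈ Set.Iic (rr m) := Iff.rfl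

lemma rr_pos {m : ℕ} (hm : 1 ≤ m) : 0 < rr m :=
  Real.rpow_pos_of_pos (by exact_mod_cast hm) _

lemma rr_le_one {m : ℕ} (hm : 1 ≤ m) : rr m ≤ 1 :=
  Real.rpow_le_one_of_one_le_of_nonpos (by exact_mod_cast hm) (by norm_num)

lemma rr_anti {c m : ℕ} (hc : 1 ≤ c) (hcm : c ≤ m) : rr m ≤ rr c :=
  Real.rpow_le_rpow_of_nonpos (by exact_mod_cast hc) (by exact_mod_cast hcm) (by norm_num)

noncomputable def cnt (U : ℕ → Ω → ℝ) (c t : ℕ) (ω : Ω) : ℕ :=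
  ((Finset.Ioc c t).filter (fun m => succ U m ω)).card

def Dset (U : ℕ → Ω → ℝ) (c j t : ℕ) : Set Ω :=
  {ω | cnt U c t ω = j ∧ (if j = 0 then t = c else (c < t ∧ succ U t ω))}

def Wset (U : ℕ → Ω → ℝ) (k t : ℕ) : Set Ω :=
  {ω | ∃ m ∈ Finset.Ioc t (t + k), succ U m ω}

def Gset (U : ℕ → Ω → ℝ) (c k j : ℕ) : Set Ω :=
  ⋃ t, Dset U c (j-1) t ∩ Wset U k t

section meas

variable {U : ℕ → Ω → ℝ} (hU : ∀ i, Measurable (U i))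
include hU

lemma meas_succ (m : ℕ) : MeasurableSet {ω | succ U m ω} :=
  (hU m) measurableSet_Iic

lemma meas_cnt (c t : ℕ) : Measurable (fun ω => cnt U c t ω) := by
  have : (fun ω => cnt U c t ω)
      = fun ω => ∑ m ∈ Finset.Ioc c t, if succ U m ω then 1 else 0 := by
    funext ω; rw [cnt, Finset.card_filter]
  rw [this]
  exact Finset.measurable_sum _ (fun m _ => Measurable.ite (meas_succ hU m)
    measurable_const measurable_const)

lemma meas_D (c j t : ℕ) : MeasurableSet (Dset U c j t) := by
  have h1 : MeasurableSet {ω | cnt U c t ω = j} :=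
    (meas_cnt hU c t) (measurableSet_singleton j)
  have : Dset U c j t = {ω | cnt U c t ω = j} ∩
      {ω | (if j = 0 then t = c else (c < t ∧ succ U t ω))} := rfl
  rw [this]
  refine h1.inter ?_
  split_ifs with hj
  · by_cases htc : t = c <;> simp [htc]
  · by_cases hct : c < t
    · simp only [hct, true_and]; exact meas_succ hU t
    · simp [hct]

lemma meas_W (k t : ℕ) : MeasurableSet (Wset U k t) := by
  have : Wset U k t = ⋃ m ∈ Finset.Ioc t (t+k), {ω | succ U m ω} := by
    ext ω; simp [Wset]
  rw [this]
  exact (Finset.Ioc t (t+k)).measurableSet_biUnion (fun m _ => meas_succ hU m)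

lemma meas_G (c k j : ℕ) : MeasurableSet (Gset U c k j) :=
  MeasurableSet.iUnion (fun t => (meas_D hU c (j-1) t).inter (meas_W hU k t))

end meas

variable (μ : Measure Ω) [IsProbabilityMeasure μ] (U : ℕ → Ω → ℝ)

lemma prodU (hUmeas : ∀ i, Measurable (U i))
    (hUindep : iIndepFun (fun i : ℕ => U (i + 1)) μ)
    (s : Finset ℕ) (hs : ∀ m ∈ s, 1 ≤ m) (f : ℕ → Set ℝ)
    (hf : ∀ m, MeasurableSet (f m)) :
    μ (⋂ m ∈ s, U m ⁻¹' f m) = ∏ m ∈ s, μ (U m ⁻¹' f m) := by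
  have h := hUindep.measure_inter_preimage_eq_mul (s.image (· - 1))
      (sets := fun i => f (i+1)) (fun i _ => hf _)
  have hinj : Set.InjOn (· - 1) ↑s := by
    intro a ha b hb hab
    have ha1 := hs a (by simpa using ha); have hb1 := hs b (by simpa using hb)
    simp only at hab; omega
  have hInter : (⋂ m ∈ s, U m ⁻¹' f m)
      = ⋂ i ∈ s.image (· - 1), U (i+1) ⁻¹' f (i+1) := by
    ext ω
    simp only [Set.mem_iInter, Finset.mem_image]
    constructor
    · rintro h i ⟨m, hm, rfl⟩
      have h1 := hs m hm
      simpa [Nat.sub_add_cancel h1] using h m hm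
    · intro h m hm
      have := h (m-1) ⟨m, hm, rfl⟩
      rwa [Nat.sub_add_cancel (hs m hm)] at this
  have hProd : (∏ i ∈ s.image (· - 1), μ (U (i+1) ⁻¹' f (i+1)))
      = ∏ m ∈ s, μ (U m ⁻¹' f m) := by
    rw [Finset.prod_image (fun a ha b hb => hinj (by simpa using ha) (by simpa using hb))]
    exact Finset.prod_congr rfl (fun m hm => by rw [Nat.sub_add_cancel (hs m hm)])
  rw [hInter, h, hProd]

variable (hUmeas : ∀ i, Measurable (U i))
  (hUindep : iIndepFun (fun i : ℕ => U (i + 1)) μ)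
  (hUunif : ∀ i : ℕ, 1 ≤ i →
      Measure.map (U i) μ = MeasureTheory.volume.restrict (Set.Icc (0:ℝ) 1))

section unif
include hUmeas hUunif

lemma measU {m : ℕ} (hm : 1 ≤ m) {B : Set ℝ} (hB : MeasurableSet B) :
    μ (U m ⁻¹' B) = MeasureTheory.volume (B ∩ Set.Icc (0:ℝ) 1) := by
  rw [← Measure.map_apply (hUmeas m) hB, hUunif m hm, Measure.restrict_apply hB]

lemma measU_succ {m : ℕ} (hm : 1 ≤ m) :
    μ {ω | succ U m ω} = ENNReal.ofReal (rr m) := by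
  have : {ω | succ U m ω} = U m ⁻¹' (Set.Iic (rr m)) := rfl
  rw [this, measU μ U hUmeas hUunif hm measurableSet_Iic]
  have h2 : Set.Iic (rr m) ∩ Set.Icc (0:ℝ) 1 = Set.Icc (0:ℝ) (rr m) := by
    ext x
    simp only [Set.mem_inter_iff, Set.mem_Iic, Set.mem_Icc]
    constructor
    · rintro ⟨h1, h2, h3⟩; exact ⟨h2, h1⟩
    · rintro ⟨h1, h2⟩; exact ⟨h2, h1, h2.trans (rr_le_one hm)⟩
  rw [h2, Real.volume_Icc, sub_zero]

lemma measU_fail {m : ℕ} (hm : 1 ≤ m) :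
    μ (U m ⁻¹' (Set.Iic (rr m))ᶜ) = ENNReal.ofReal (1 - rr m) := by
  rw [measU μ U hUmeas hUunif hm measurableSet_Iic.compl]
  have h2 : (Set.Iic (rr m))ᶜ ∩ Set.Icc (0:ℝ) 1 = Set.Ioc (rr m) 1 := by
    ext x
    simp only [Set.mem_inter_iff, Set.mem_compl_iff, Set.mem_Iic, Set.mem_Icc,
      Set.mem_Ioc, not_le]
    constructor
    · rintro ⟨h1, h2, h3⟩; exact ⟨h1, h3⟩
    · rintro ⟨h1, h2⟩; exact ⟨h1, ((rr_pos hm).le.trans h1.le), h2⟩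
  rw [h2, Real.volume_Ioc]

end unif

lemma prod_ratio {a : ℕ} (ha : 1 ≤ a) : ∀ N, a ≤ N →
    (∏ m ∈ Finset.Ioc a N, (((m:ℝ) - 1)/m)) = (a:ℝ)/N := by
  intro N
  induction N with
  | zero => intro h; omega
  | succ N ih =>
      intro h
      rcases Nat.lt_or_ge N a with hN | hN
      · have hna : a = N + 1 := by omega
        subst hna
        rw [Finset.Ioc_self]
        rw [Finset.prod_empty]
        push_cast
        rw [div_self (by positivity : ((N:ℝ)+1) ≠ 0)]
      · rw [Finset.prod_Ioc_succ_top hN, ih hN]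
        have hN0 : (N:ℝ) ≠ 0 := by exact_mod_cast (by omega : N ≠ 0)
        push_cast
        field_simp
        ring

include hUmeas hUindep hUunif in
lemma bad_null :
    μ {ω | ¬ (∀ T : ℕ, ∃ m, T < m ∧ succ U m ω)} = 0 := by
  have hB : {ω | ¬ (∀ T : ℕ, ∃ m, T < m ∧ succ U m ω)}
      = ⋃ T : ℕ, {ω | ∀ m, T < m → ¬ succ U m ω} := by
    ext ω
    simp only [Set.mem_setOf_eq, Set.mem_iUnion, not_forall, not_exists, not_and]
  rw [hB]
  refine measure_iUnion_null (fun T => ?_)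
  have hbound : ∀ N : ℕ, T + 1 ≤ N →
      μ {ω | ∀ m, T < m → ¬ succ U m ω} ≤ ENNReal.ofReal ((T+1:ℝ)/N) := by
    intro N hN
    have hsub : {ω | ∀ m, T < m → ¬ succ U m ω}
        ⊆ ⋂ m ∈ Finset.Ioc (T+1) N, U m ⁻¹' (Set.Iic (rr m))ᶜ := by
      intro ω hω
      simp only [Set.mem_iInter, Finset.mem_Ioc, Set.mem_preimage, Set.mem_compl_iff,
        Set.mem_Iic]
      rintro m ⟨hm1, hm2⟩
      exact fun hle => hω m (by omega) hle
    refine (measure_mono hsub).trans ?_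
    rw [prodU μ U hUmeas hUindep (Finset.Ioc (T+1) N) (fun m hm => by
          simp only [Finset.mem_Ioc] at hm; omega)
        (fun m => (Set.Iic (rr m))ᶜ) (fun m => measurableSet_Iic.compl)]
    have heach : ∀ m ∈ Finset.Ioc (T+1) N,
        μ (U m ⁻¹' (Set.Iic (rr m))ᶜ) = ENNReal.ofReal (1 - rr m) := by
      intro m hm
      simp only [Finset.mem_Ioc] at hm
      exact measU_fail μ U hUmeas hUunif (by omega)
    rw [Finset.prod_congr rfl heach]
    have hle : ∀ m ∈ Finset.Ioc (T+1) N,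
        ENNReal.ofReal (1 - rr m) ≤ ENNReal.ofReal (((m:ℝ)-1)/m) := by
      intro m hm
      simp only [Finset.mem_Ioc] at hm
      have hm1 : (1:ℕ) ≤ m := by omega
      apply ENNReal.ofReal_le_ofReal
      have hmr : (1:ℝ) ≤ (m:ℝ) := by exact_mod_cast hm1
      have h1m : 1/(m:ℝ) ≤ rr m := by
        have := rr_anti hm1 (le_refl m)
        have h : (m:ℝ) ^ (-(1:ℝ)) ≤ (m:ℝ) ^ (-(1:ℝ)/2) :=
          Real.rpow_le_rpow_of_exponent_le hmr (by norm_num)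
        rw [Real.rpow_neg_one] at h
        rw [one_div]
        exact h
      have : ((m:ℝ)-1)/m = 1 - 1/m := by field_simp
      rw [this]
      linarith
    refine (Finset.prod_le_prod' hle).trans ?_
    rw [← ENNReal.ofReal_prod_of_nonneg (fun m hm => by
        simp only [Finset.mem_Ioc] at hm
        have : (1:ℝ) ≤ (m:ℝ) := by exact_mod_cast (by omega : (1:ℕ) ≤ m)
        exact div_nonneg (by linarith) (by linarith))]
    rw [prod_ratio (by omega) N hN]
    push_cast
    exact le_refl _

  have htend : Filter.Tendsto (fun N : ℕ => ENNReal.ofReal ((T+1:ℝ)/N)) Filter.atTop (nhds 0) := by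
    rw [← ENNReal.ofReal_zero]
    exact (ENNReal.continuous_ofReal.tendsto 0).comp
      (tendsto_const_div_atTop_nhds_zero_nat _)
  have : μ {ω | ∀ m, T < m → ¬ succ U m ω} ≤ 0 :=
    ge_of_tendsto htend (Filter.eventually_atTop.2 ⟨T+1, fun N hN => hbound N hN⟩)
  exact le_antisymm this zero_le

lemma mem_atom_iff (P s : Finset ℕ) (ω : Ω) :
    (ω ∈ ⋂ m ∈ s, U m ⁻¹' (if m ∈ P then Set.Iic (rr m) else (Set.Iic (rr m))ᶜ))
      ↔ ∀ m ∈ s, (succ U m ω ↔ m ∈ P) := by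
  simp only [Set.mem_iInter, Set.mem_preimage]
  refine forall₂_congr (fun m hm => ?_)
  by_cases hP : m ∈ P
  · simp only [hP, if_true, iff_true, Set.mem_Iic]; exact Iff.rfl
  · simp only [hP, if_false, iff_false, Set.mem_compl_iff, Set.mem_Iic]; exact Iff.rfl

include hUmeas hUindep in
lemma indep_pattern (s : Finset ℕ) (hs : ∀ m ∈ s, 1 ≤ m)
    (R : Set Ω)
    (hR : ∀ ω ω', (∀ m ∈ s, (succ U m ω ↔ succ U m ω')) → ω ∈ R → ω' ∈ R)
    {m' : ℕ} (hm's : m' ∉ s) (hm'1 : 1 ≤ m') {B : Set ℝ} (hB : MeasurableSet B) :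
    μ (R ∩ U m' ⁻¹' B) = μ R * μ (U m' ⁻¹' B) := by
  set atom : Finset ℕ → Set Ω :=
    fun P => ⋂ m ∈ s, U m ⁻¹' (if m ∈ P then Set.Iic (rr m) else (Set.Iic (rr m))ᶜ)
    with hatomdef
  have hmem : ∀ (P : Finset ℕ) ω, ω ∈ atom P ↔ ∀ m ∈ s, (succ U m ω ↔ m ∈ P) :=
    fun P ω => mem_atom_iff U P s ω
  set P𝒫 : Finset (Finset ℕ) :=
    s.powerset.filter (fun P => ∃ ω, ω ∈ R ∧ ∀ m ∈ s, (succ U m ω ↔ m ∈ P)) with hPP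
  have hdecomp : R = ⋃ P ∈ P𝒫, atom P := by
    ext ω
    simp only [Set.mem_iUnion, exists_prop]
    constructor
    · intro hω
      refine ⟨s.filter (fun m => succ U m ω), ?_, ?_⟩
      · rw [hPP, Finset.mem_filter]
        exact ⟨Finset.mem_powerset.2 (Finset.filter_subset _ _),
          ⟨ω, hω, fun m hm => by simp [Finset.mem_filter, hm]⟩⟩
      · rw [hmem]
        intro m hm; simp [Finset.mem_filter, hm]
    · rintro ⟨P, hP, hωP⟩
      rw [hPP, Finset.mem_filter] at hP
      obtain ⟨-, ω', hω'R, hpat⟩ := hP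
      exact hR ω' ω (fun m hm => (hpat m hm).trans ((hmem P ω).1 hωP m hm).symm) hω'R
  have hmeasatom : ∀ P, MeasurableSet (atom P) := fun P =>
    Finset.measurableSet_biInter s (fun m _ => (hUmeas m) (by
      split_ifs
      exacts [measurableSet_Iic, measurableSet_Iic.compl]))
  have hdisj : (↑P𝒫 : Set (Finset ℕ)).PairwiseDisjoint atom := by
    intro P hP Q hQ hPQ
    refine Set.disjoint_left.2 (fun {ω} hωP hωQ => hPQ ?_)
    simp only [Finset.mem_coe, hPP, Finset.mem_filter, Finset.mem_powerset] at hP hQ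
    ext m
    by_cases hm : m ∈ s
    · rw [← (hmem P ω).1 hωP m hm, ← (hmem Q ω).1 hωQ m hm]
    · constructor <;> intro h
      · exact absurd (hP.1 h) hm
      · exact absurd (hQ.1 h) hm
  have hkey : ∀ P : Finset ℕ,
      μ (atom P ∩ U m' ⁻¹' B) = μ (atom P) * μ (U m' ⁻¹' B) := by
    intro P
    set g : ℕ → Set ℝ := fun m => if m = m' then B else
      (if m ∈ P then Set.Iic (rr m) else (Set.Iic (rr m))ᶜ) with hg
    have hgmeas : ∀ m, MeasurableSet (g m) := fun m => by
      rw [hg]; dsimp only; split_ifs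
      exacts [hB, measurableSet_Iic, measurableSet_Iic.compl]
    have hatomg : atom P = ⋂ m ∈ s, U m ⁻¹' g m := by
      rw [hatomdef]
      refine Set.iInter₂_congr (fun m hm => ?_)
      have : m ≠ m' := fun h => hm's (h ▸ hm)
      rw [hg]; simp only [this, if_false]
    have hins : atom P ∩ U m' ⁻¹' B = ⋂ m ∈ insert m' s, U m ⁻¹' g m := by
      rw [Finset.set_biInter_insert, hatomg]
      have : g m' = B := by rw [hg]; simp
      rw [this, Set.inter_comm]
    rw [hins, hatomg]
    rw [prodU μ U hUmeas hUindep (insert m' s)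
        (fun m hm => by
          rcases Finset.mem_insert.1 hm with h | h
          · exact h ▸ hm'1
          · exact hs m h) g hgmeas,
      prodU μ U hUmeas hUindep s hs g hgmeas,
      Finset.prod_insert hm's]
    have : g m' = B := by rw [hg]; simp
    rw [this, mul_comm]
  calc μ (R ∩ U m' ⁻¹' B) = μ (⋃ P ∈ P𝒫, (atom P ∩ U m' ⁻¹' B)) := by
        rw [hdecomp, Set.iUnion₂_inter]
    _ = ∑ P ∈ P𝒫, μ (atom P ∩ U m' ⁻¹' B) := by
        refine measure_biUnion_finset ?_ (fun P _ => (hmeasatom P).inter ((hUmeas m') hB))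
        exact fun P hP Q hQ hne => (hdisj hP hQ hne).mono Set.inter_subset_left
          Set.inter_subset_left
    _ = ∑ P ∈ P𝒫, μ (atom P) * μ (U m' ⁻¹' B) := by
        exact Finset.sum_congr rfl (fun P _ => hkey P)
    _ = (∑ P ∈ P𝒫, μ (atom P)) * μ (U m' ⁻¹' B) := by rw [Finset.sum_mul]
    _ = μ R * μ (U m' ⁻¹' B) := by
        rw [hdecomp, measure_biUnion_finset hdisj (fun P _ => hmeasatom P)]

def Wtset (U : ℕ → Ω → ℝ) (k t s : ℕ) : Set Ω :=
  {ω | ∃ m ∈ Finset.Ioc s (min (s+k) t), succ U m ω}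

def Gtset (U : ℕ → Ω → ℝ) (c k t j : ℕ) : Set Ω :=
  ⋃ s ∈ Finset.range t, (Dset U c (j-1) s ∩ Wtset U k t s)

lemma mem_Dset_iff {U : ℕ → Ω → ℝ} {c j t : ℕ} (hj : j ≠ 0) {ω : Ω} :
    ω ∈ Dset U c j t ↔ (cnt U c t ω = j ∧ c < t ∧ succ U t ω) := by
  simp [Dset, hj]

lemma mem_Dset_zero {U : ℕ → Ω → ℝ} {c t : ℕ} {ω : Ω} :
    ω ∈ Dset U c 0 t ↔ (cnt U c t ω = 0 ∧ t = c) := by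
  simp [Dset]

lemma D_cnt {U : ℕ → Ω → ℝ} {c j t : ℕ} {ω : Ω} (h : ω ∈ Dset U c j t) :
    cnt U c t ω = j := h.1

lemma D_cle {U : ℕ → Ω → ℝ} {c j t : ℕ} {ω : Ω} (h : ω ∈ Dset U c j t) :
    c ≤ t := by
  by_cases hj : j = 0
  · subst hj; rw [mem_Dset_zero] at h; omega
  · rw [mem_Dset_iff hj] at h; exact h.2.1.le

lemma cnt_mono {U : ℕ → Ω → ℝ} {c s t : ℕ} (hst : s ≤ t) (ω : Ω) :
    cnt U c s ω ≤ cnt U c t ω :=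
  Finset.card_le_card (Finset.filter_subset_filter _
    (Finset.Ioc_subset_Ioc_right hst))

lemma cnt_lt {U : ℕ → Ω → ℝ} {c t t' : ℕ} {ω : Ω} (h1 : t < t') (hc : c < t')
    (hsucc : succ U t' ω) : cnt U c t ω < cnt U c t' ω := by
  have hnotmem : t' ∉ (Finset.Ioc c t).filter (fun m => succ U m ω) := by
    intro hmem
    have := (Finset.mem_Ioc.1 (Finset.mem_filter.1 hmem).1).2; omega
  have hsub : insert t' ((Finset.Ioc c t).filter (fun m => succ U m ω))
      ⊆ (Finset.Ioc c t').filter (fun m => succ U m ω) := by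
    intro m hm
    rcases Finset.mem_insert.1 hm with rfl | hm
    · exact Finset.mem_filter.2 ⟨Finset.mem_Ioc.2 ⟨hc, le_refl _⟩, hsucc⟩
    · obtain ⟨hmIoc, hms⟩ := Finset.mem_filter.1 hm
      obtain ⟨h3, h4⟩ := Finset.mem_Ioc.1 hmIoc
      exact Finset.mem_filter.2 ⟨Finset.mem_Ioc.2 ⟨h3, by omega⟩, hms⟩
  calc cnt U c t ω < cnt U c t ω + 1 := Nat.lt_succ_self _
    _ = (insert t' ((Finset.Ioc c t).filter (fun m => succ U m ω))).card :=
        (Finset.card_insert_of_notMem hnotmem).symm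
    _ ≤ cnt U c t' ω := Finset.card_le_card hsub

lemma D_disjoint (U : ℕ → Ω → ℝ) (c j : ℕ) {t t' : ℕ} (hne : t ≠ t') :
    Disjoint (Dset U c j t) (Dset U c j t') := by
  have aux : ∀ {t t' : ℕ}, t < t' → ∀ {ω}, ω ∈ Dset U c j t → ω ∈ Dset U c j t' → False := by
    intro t t' hlt ω h h'
    by_cases hj : j = 0
    · subst hj
      rw [mem_Dset_zero] at h h'
      omega
    · rw [mem_Dset_iff hj] at h h'
      have := cnt_lt hlt h'.2.1 h'.2.2 (ω := ω) (c := c)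
      omega
  refine Set.disjoint_left.2 (fun {ω} h h' => ?_)
  rcases lt_or_gt_of_ne hne with hlt | hlt
  · exact aux hlt h h'
  · exact aux hlt h' h

lemma G_iff_Gt (U : ℕ → Ω → ℝ) {c k t jstar j' : ℕ} (hj'1 : 1 ≤ j') (hj' : j' < jstar)
    {ω : Ω} (hD : ω ∈ Dset U c (jstar - 1) t) :
    ω ∈ Gset U c k j' ↔ ω ∈ Gtset U c k t j' := by
  have hcntt : cnt U c t ω = jstar - 1 := D_cnt hD
  constructor
  · intro hω
    obtain ⟨s, hDs, hWs⟩ := Set.mem_iUnion.1 hω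
    have hcnts : cnt U c s ω = j' - 1 := D_cnt hDs
    have hcs : c ≤ s := D_cle hDs
    have hcltcnt : cnt U c s ω < cnt U c t ω := by rw [hcnts, hcntt]; omega
    have hst : s < t := by
      by_contra hcon
      push_neg at hcon
      have hmono := cnt_mono (U := U) (c := c) hcon ω
      omega
    have hnsub : ¬ ((Finset.Ioc c t).filter (fun m => succ U m ω)
        ⊆ (Finset.Ioc c s).filter (fun m => succ U m ω)) := by
      intro hsub
      have := Finset.card_le_card hsub
      have h1 : cnt U c t ω ≤ cnt U c s ω := this
      omega
    obtain ⟨m1, hm1t, hm1s⟩ := Finset.not_subset.1 hnsub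
    obtain ⟨hm1Ioc, hm1succ⟩ := Finset.mem_filter.1 hm1t
    obtain ⟨hc1, h1t⟩ := Finset.mem_Ioc.1 hm1Ioc
    have hm1gt : s < m1 := by
      by_contra hcon
      push_neg at hcon
      exact hm1s (Finset.mem_filter.2 ⟨Finset.mem_Ioc.2 ⟨hc1, hcon⟩, hm1succ⟩)
    obtain ⟨m, hmIoc, hmsucc⟩ := hWs
    obtain ⟨hsm, hmk⟩ := Finset.mem_Ioc.1 hmIoc
    refine Set.mem_iUnion₂.2 ⟨s, Finset.mem_range.2 hst, hDs, ?_⟩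
    refine ⟨min m m1, Finset.mem_Ioc.2 ⟨lt_min hsm hm1gt, le_min (min_le_left _ _ |>.trans hmk) ((min_le_right _ _).trans h1t)⟩, ?_⟩
    rcases min_cases m m1 with ⟨hmin, -⟩ | ⟨hmin, -⟩
    · rw [hmin]; exact hmsucc
    · rw [hmin]; exact hm1succ
  · intro hω
    obtain ⟨s, hsr, hDs, hWt⟩ := Set.mem_iUnion₂.1 hω
    obtain ⟨m, hm, hsucc⟩ := hWt
    obtain ⟨h1, h2⟩ := Finset.mem_Ioc.1 hm
    exact Set.mem_iUnion.2 ⟨s, hDs,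
      ⟨m, Finset.mem_Ioc.2 ⟨h1, h2.trans (min_le_left _ _)⟩, hsucc⟩⟩

lemma pattern_Rt (U : ℕ → Ω → ℝ) {c k t jstar : ℕ} (S' : Finset ℕ)
    (hS' : ∀ j' ∈ S', 1 ≤ j' ∧ j' < jstar)
    {ω ω' : Ω} (hpat : ∀ m ∈ Finset.Ioc c t, (succ U m ω ↔ succ U m ω')) :
    ω ∈ (⋂ j' ∈ S', Gtset U c k t j') ∩ Dset U c (jstar - 1) t →
    ω' ∈ (⋂ j' ∈ S', Gtset U c k t j') ∩ Dset U c (jstar - 1) t := by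
  have hcnt_eq : ∀ s, s ≤ t → cnt U c s ω = cnt U c s ω' := by
    intro s hst
    unfold cnt
    congr 1
    apply Finset.filter_congr
    intro m hm
    obtain ⟨h1, h2⟩ := Finset.mem_Ioc.1 hm
    have h := hpat m (Finset.mem_Ioc.2 ⟨h1, h2.trans hst⟩)
    first
    | exact h
    | exact propext h
  have hsucc_eq : ∀ m, c < m → m ≤ t → (succ U m ω ↔ succ U m ω') :=
    fun m h1 h2 => hpat m (Finset.mem_Ioc.2 ⟨h1, h2⟩)
  have hDtrans : ∀ j s, s ≤ t → ω ∈ Dset U c j s → ω' ∈ Dset U c j s := by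
    intro j s hst hD
    by_cases hj : j = 0
    · subst hj
      rw [mem_Dset_zero] at hD ⊢
      exact ⟨by rw [← hcnt_eq s hst]; exact hD.1, hD.2⟩
    · rw [mem_Dset_iff hj] at hD ⊢
      exact ⟨by rw [← hcnt_eq s hst]; exact hD.1, hD.2.1,
        (hsucc_eq s hD.2.1 hst).1 hD.2.2⟩
  rintro ⟨hG, hD⟩
  refine ⟨Set.mem_iInter₂.2 (fun j' hj' => ?_), hDtrans _ t le_rfl hD⟩
  have hGj := Set.mem_iInter₂.1 hG j' hj'
  obtain ⟨s, hsr, hDs, hW⟩ := Set.mem_iUnion₂.1 hGj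
  have hsrange := Finset.mem_range.1 hsr
  have hcs : c ≤ s := D_cle hDs
  refine Set.mem_iUnion₂.2 ⟨s, hsr, hDtrans _ s hsrange.le hDs, ?_⟩
  obtain ⟨m, hm, hms⟩ := hW
  obtain ⟨h1, h2⟩ := Finset.mem_Ioc.1 hm
  exact ⟨m, hm, (hsucc_eq m (lt_of_le_of_lt hcs h1) (h2.trans (min_le_right _ _))).1 hms⟩

include hUmeas hUindep hUunif in
lemma key (c k : ℕ) (hc : 1 ≤ c) :
    ∀ (a : ℕ) (S : Finset ℕ), S.card = a → (∀ j ∈ S, 1 ≤ j) →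
    μ (⋂ j ∈ S, Gset U c k j)
      ≤ ((k : ℝ≥0∞) * ENNReal.ofReal (rr c)) ^ a := by
  intro a
  induction a with
  | zero =>
      intro S hcard hS
      rw [Finset.card_eq_zero.1 hcard]
      simp
  | succ a ih =>
      intro S hcard hS
      have hne : S.Nonempty := Finset.card_pos.1 (by omega)
      set js := S.max' hne with hjs
      have hjsS : js ∈ S := S.max'_mem hne
      have hjs1 : 1 ≤ js := hS js hjsS
      set S' := S.erase js with hS'def
      have hcard' : S'.card = a := by
        rw [hS'def, Finset.card_erase_of_mem hjsS, hcard]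
        omega
      have hS'lt : ∀ j' ∈ S', 1 ≤ j' ∧ j' < js := by
        intro j' hj'
        have h1 := hS j' (Finset.erase_subset _ _ hj')
        have h2 := S.le_max' j' (Finset.erase_subset _ _ hj')
        have h3 := Finset.ne_of_mem_erase hj'
        exact ⟨h1, lt_of_le_of_ne h2 h3⟩
      have hsplit : (⋂ j ∈ S, Gset U c k j)
          = (⋂ j ∈ S', Gset U c k j) ∩ Gset U c k js := by
        conv_lhs => rw [← Finset.insert_erase hjsS]
        rw [Finset.set_biInter_insert, Set.inter_comm, hS'def]
      set E := ⋂ j ∈ S', Gset U c k j with hE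
      set q := (k : ℝ≥0∞) * ENNReal.ofReal (rr c) with hq
      have hmeasE : MeasurableSet E :=
        Finset.measurableSet_biInter _ (fun j _ => meas_G hUmeas c k j)
      set R : ℕ → Set Ω := fun t => E ∩ Dset U c (js - 1) t with hR
      have hmeasR : ∀ t, MeasurableSet (R t) :=
        fun t => hmeasE.inter (meas_D hUmeas _ _ _)
      have hcover : E ∩ Gset U c k js ⊆ ⋃ t, (R t ∩ Wset U k t) := by
        rintro ω ⟨hE', hG⟩
        obtain ⟨t, hD, hW⟩ := Set.mem_iUnion.1 hG
        exact Set.mem_iUnion.2 ⟨t, ⟨hE', hD⟩, hW⟩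
      have hpert : ∀ t, μ (R t ∩ Wset U k t) ≤ μ (R t) * q := by
        intro t
        by_cases hct : c ≤ t
        · have hR_eq : R t = (⋂ j' ∈ S', Gtset U c k t j') ∩ Dset U c (js-1) t := by
            rw [hR, hE]
            ext ω
            simp only [Set.mem_inter_iff, Set.mem_iInter]
            constructor
            · rintro ⟨hG, hD⟩
              exact ⟨fun j' hj' => (G_iff_Gt U (hS'lt j' hj').1 (hS'lt j' hj').2 hD).1
                (hG j' hj'), hD⟩
            · rintro ⟨hG, hD⟩
              exact ⟨fun j' hj' => (G_iff_Gt U (hS'lt j' hj').1 (hS'lt j' hj').2 hD).2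
                (hG j' hj'), hD⟩
          have hRdet : ∀ ω ω', (∀ m ∈ Finset.Ioc c t, (succ U m ω ↔ succ U m ω')) →
              ω ∈ R t → ω' ∈ R t := by
            intro ω ω' hpat hω
            rw [hR_eq] at hω ⊢
            exact pattern_Rt U S' hS'lt hpat hω
          have hsubW : R t ∩ Wset U k t
              ⊆ ⋃ m ∈ Finset.Ioc t (t+k), (R t ∩ {ω | succ U m ω}) := by
            rintro ω ⟨hRω, hW⟩
            obtain ⟨m, hm, hsucc⟩ := hW
            exact Set.mem_iUnion₂.2 ⟨m, hm, hRω, hsucc⟩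
          refine le_trans (measure_mono hsubW)
            ((measure_biUnion_finset_le _ _).trans ?_)
          have heach : ∀ m ∈ Finset.Ioc t (t+k),
              μ (R t ∩ {ω | succ U m ω}) ≤ μ (R t) * ENNReal.ofReal (rr c) := by
            intro m hm
            obtain ⟨htm, hmk⟩ := Finset.mem_Ioc.1 hm
            have hm1 : 1 ≤ m := by omega
            have hmnotin : m ∉ Finset.Ioc c t := by
              intro h
              have := (Finset.mem_Ioc.1 h).2; omega
            have hs1 : ∀ m'' ∈ Finset.Ioc c t, 1 ≤ m'' := by
              intro m'' h
              have := (Finset.mem_Ioc.1 h).1; omega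
            have hrw : {ω | succ U m ω} = U m ⁻¹' Set.Iic (rr m) := rfl
            rw [hrw, indep_pattern μ U hUmeas hUindep (Finset.Ioc c t) hs1 (R t)
              hRdet hmnotin hm1 measurableSet_Iic]
            refine mul_le_mul_right ?_ _
            rw [← hrw, measU_succ μ U hUmeas hUunif hm1]
            exact ENNReal.ofReal_le_ofReal (rr_anti hc (by omega))
          refine le_trans (Finset.sum_le_sum heach) ?_
          rw [Finset.sum_const, Nat.card_Ioc]
          have hkk : t + k - t = k := by omega
          rw [hkk, hq, nsmul_eq_mul]
          ring_nf
          exact le_refl _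
        · have hDempty : Dset U c (js-1) t = ∅ := by
            ext ω
            simp only [Set.mem_empty_iff_false, iff_false]
            intro hD
            exact hct (D_cle hD)
          have : R t = ∅ := by
            rw [hR]; dsimp only; rw [hDempty, Set.inter_empty]
          rw [this, Set.empty_inter, measure_empty]
          exact zero_le
      have hdisjR : Pairwise (Function.onFun Disjoint R) := by
        intro t t' hne
        exact ((D_disjoint U c (js-1) hne).mono Set.inter_subset_right
          Set.inter_subset_right)
      calc μ (⋂ j ∈ S, Gset U c k j) = μ (E ∩ Gset U c k js) := by rw [hsplit]
        _ ≤ μ (⋃ t, (R t ∩ Wset U k t)) := measure_mono hcover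
        _ ≤ ∑' t, μ (R t ∩ Wset U k t) := measure_iUnion_le _
        _ ≤ ∑' t, μ (R t) * q := ENNReal.tsum_le_tsum hpert
        _ = (∑' t, μ (R t)) * q := ENNReal.tsum_mul_right
        _ ≤ q ^ a * q := by
            refine mul_le_mul_left ?_ q
            have hsum : (∑' t, μ (R t)) = μ (⋃ t, R t) :=
              (measure_iUnion hdisjR (fun t => hmeasR t)).symm
            rw [hsum]
            refine le_trans (measure_mono (Set.iUnion_subset
              (fun t => Set.inter_subset_left))) ?_
            exact ih S' hcard' (fun j hj => hS j (Finset.erase_subset _ _ hj))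
        _ = q ^ (a+1) := (pow_succ q a).symm

lemma link (U : ℕ → Ω → ℝ) (ω : Ω) (c : ℕ) (g : ℕ → ℕ)
    (hg0 : g 0 = c) (hgs : ∀ j, g (j+1) = sInf {m | g j < m ∧ succ U m ω})
    (hgood : ∀ T : ℕ, ∃ m, T < m ∧ succ U m ω) :
    (∀ j, c ≤ g j ∧ cnt U c (g j) ω = j) ∧
    (∀ j, g j < g (j+1) ∧ succ U (g (j+1)) ω) := by
  have haux : ∀ j, g j < g (j+1) ∧ succ U (g (j+1)) ω ∧
      ∀ m, g j < m → m < g (j+1) → ¬ succ U m ω := by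
    intro j
    have hne : {m | g j < m ∧ succ U m ω}.Nonempty := by
      obtain ⟨m, hm⟩ := hgood (g j); exact ⟨m, hm⟩
    have hmem := Nat.sInf_mem hne
    rw [← hgs j] at hmem
    refine ⟨hmem.1, hmem.2, ?_⟩
    intro m h1 h2 hsucc
    have hle : sInf {m | g j < m ∧ succ U m ω} ≤ m := Nat.sInf_le ⟨h1, hsucc⟩
    rw [← hgs j] at hle; omega
  refine ⟨?_, fun j => ⟨(haux j).1, (haux j).2.1⟩⟩
  intro j
  induction j with
  | zero =>
      refine ⟨hg0.ge, ?_⟩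
      rw [hg0]
      simp [cnt]
  | succ j ihj =>
      obtain ⟨hc1, hcnt1⟩ := ihj
      obtain ⟨hlt, hsucc, hmin⟩ := haux j
      refine ⟨by omega, ?_⟩
      have hset : (Finset.Ioc c (g (j+1))).filter (fun m => succ U m ω)
          = insert (g (j+1)) ((Finset.Ioc c (g j)).filter (fun m => succ U m ω)) := by
        ext m
        simp only [Finset.mem_filter, Finset.mem_insert, Finset.mem_Ioc]
        constructor
        · rintro ⟨⟨h1, h2⟩, h3⟩
          rcases Nat.lt_or_ge (g j) m with h4 | h4
          · left
            by_contra h5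
            exact hmin m h4 (by omega) h3
          · right; exact ⟨⟨h1, h4⟩, h3⟩
        · rintro (rfl | ⟨⟨h1, h2⟩, h3⟩)
          · exact ⟨⟨by omega, le_refl _⟩, hsucc⟩
          · exact ⟨⟨h1, by omega⟩, h3⟩
      unfold cnt at hcnt1 ⊢
      rw [hset, Finset.card_insert_of_notMem (by
        intro hmem
        have := (Finset.mem_Ioc.1 (Finset.mem_filter.1 hmem).1).2
        omega), hcnt1]

lemma mem_G (U : ℕ → Ω → ℝ) (ω : Ω) (c : ℕ) (g : ℕ → ℕ) (k : ℕ)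
    (hg0 : g 0 = c) (hgs : ∀ j, g (j+1) = sInf {m | g j < m ∧ succ U m ω})
    (hgood : ∀ T : ℕ, ∃ m, T < m ∧ succ U m ω)
    {j : ℕ} (hj : 1 ≤ j) (hgap : g j - g (j-1) ≤ k) :
    ω ∈ Gset U c k j := by
  obtain ⟨hfacts, hsteps⟩ := link U ω c g hg0 hgs hgood
  have hsm : StrictMono g := strictMono_nat_of_lt_succ (fun i => (hsteps i).1)
  obtain ⟨j', rfl⟩ : ∃ j', j = j' + 1 := ⟨j - 1, by omega⟩
  have hj1 : (j' + 1) - 1 = j' := by omega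
  rw [hj1] at hgap
  refine Set.mem_iUnion.2 ⟨g j', ?_, ?_⟩
  · rw [hj1]
    by_cases hj0 : j' = 0
    · subst hj0
      rw [mem_Dset_zero]
      exact ⟨(hfacts 0).2, hg0⟩
    · rw [mem_Dset_iff hj0]
      refine ⟨(hfacts j').2, ?_, ?_⟩
      · calc c = g 0 := hg0.symm
          _ < g j' := hsm (Nat.pos_of_ne_zero hj0)
      · obtain ⟨i, rfl⟩ : ∃ i, j' = i + 1 := ⟨j' - 1, by omega⟩
        exact (hsteps i).2
  · have h1 := (hsteps j').1
    exact ⟨g (j'+1), Finset.mem_Ioc.2 ⟨h1, by omega⟩, (hsteps j').2⟩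

include hUmeas hUindep hUunif in
lemma perN {ε : ℝ}
    (N : ℕ → ℕ → Ω → ℕ)
    (hN0 : ∀ n ω, N n 0 ω = ⌈(n:ℝ) ^ ε⌉₊)
    (hNs : ∀ n j ω, N n (j + 1) ω =
      sInf {m : ℕ | N n j ω < m ∧ U m ω ≤ (m:ℝ) ^ (-(1:ℝ)/2)})
    (A : ℕ → ℕ → Ω → ℕ)
    (hA : ∀ n k ω, A n k ω =
      ((Finset.Icc 1 n).filter (fun j => N n j ω - N n (j - 1) ω ≤ k)).card)
    (n : ℕ) (hn2 : 2 ≤ n) :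
    μ {ω | (n:ℝ) ^ (1 - ε / 4) < (A n ⌈Real.log n ^ 2⌉₊ ω : ℝ)}
      ≤ (n.choose (⌊(n:ℝ) ^ (1 - ε / 4)⌋₊ + 1) : ℝ≥0∞) *
        (((⌈Real.log n ^ 2⌉₊ : ℕ) : ℝ≥0∞) * ENNReal.ofReal (rr ⌈(n:ℝ) ^ ε⌉₊))
          ^ (⌊(n:ℝ) ^ (1 - ε / 4)⌋₊ + 1) := by
  set c := ⌈(n:ℝ) ^ ε⌉₊ with hcdef
  set k := ⌈Real.log n ^ 2⌉₊ with hkdef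
  set x := (n:ℝ) ^ (1 - ε / 4) with hxdef
  set a := ⌊x⌋₊ + 1 with hadef
  have hcover : {ω | x < (A n k ω : ℝ)} ⊆
      {ω | ¬ (∀ T : ℕ, ∃ m, T < m ∧ succ U m ω)} ∪
      ⋃ S ∈ Finset.powersetCard a (Finset.Icc 1 n), ⋂ j ∈ S, Gset U c k j := by
    intro ω hω
    by_cases hgood : ∀ T : ℕ, ∃ m, T < m ∧ succ U m ω
    · right
      rw [Set.mem_setOf_eq, hA] at hω
      have hxpos : (0:ℝ) ≤ x := Real.rpow_nonneg (Nat.cast_nonneg n) _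
      have hacard : a ≤ ((Finset.Icc 1 n).filter
          (fun j => N n j ω - N n (j-1) ω ≤ k)).card := by
        have := (Nat.floor_lt hxpos).2 hω
        omega
      obtain ⟨S, hSsub, hScard⟩ := Finset.exists_subset_card_eq hacard
      refine Set.mem_iUnion₂.2 ⟨S, ?_, ?_⟩
      · exact Finset.mem_powersetCard.2 ⟨hSsub.trans (Finset.filter_subset _ _), hScard⟩
      · refine Set.mem_iInter₂.2 (fun j hj => ?_)
        have hjf := hSsub hj
        obtain ⟨hjIcc, hgap⟩ := Finset.mem_filter.1 hjf
        obtain ⟨hj1, hjn⟩ := Finset.mem_Icc.1 hjIcc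
        exact mem_G U ω c (fun i => N n i ω) k (hN0 n ω) (fun i => hNs n i ω)
          hgood hj1 hgap
    · left; exact hgood
  calc μ {ω | x < (A n k ω : ℝ)}
      ≤ μ ({ω | ¬ (∀ T : ℕ, ∃ m, T < m ∧ succ U m ω)}) +
        μ (⋃ S ∈ Finset.powersetCard a (Finset.Icc 1 n), ⋂ j ∈ S, Gset U c k j) :=
        (measure_mono hcover).trans (measure_union_le _ _)
    _ = μ (⋃ S ∈ Finset.powersetCard a (Finset.Icc 1 n), ⋂ j ∈ S, Gset U c k j) := by
        rw [bad_null μ U hUmeas hUindep hUunif, zero_add]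
    _ ≤ ∑ S ∈ Finset.powersetCard a (Finset.Icc 1 n), μ (⋂ j ∈ S, Gset U c k j) :=
        measure_biUnion_finset_le _ _
    _ ≤ ∑ S ∈ Finset.powersetCard a (Finset.Icc 1 n),
          ((k : ℝ≥0∞) * ENNReal.ofReal (rr c)) ^ a := by
        refine Finset.sum_le_sum (fun S hS => ?_)
        obtain ⟨hsub, hcard⟩ := Finset.mem_powersetCard.1 hS
        refine key μ U hUmeas hUindep hUunif c k ?_ a S hcard
          (fun j hj => (Finset.mem_Icc.1 (hsub hj)).1)
        rw [hcdef]
        refine Nat.ceil_pos.2 (Real.rpow_pos_of_pos ?_ _)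
        exact_mod_cast Nat.lt_of_lt_of_le Nat.zero_lt_two hn2
    _ = (n.choose a : ℝ≥0∞) * ((k : ℝ≥0∞) * ENNReal.ofReal (rr c)) ^ a := by
        rw [Finset.sum_const, Finset.card_powersetCard, Nat.card_Icc]
        simp [nsmul_eq_mul]

lemma realchain {n a k c : ℕ} {ε : ℝ} (hε0 : 0 < ε) (hn2 : 2 ≤ n)
    (hk1 : 1 ≤ k) (hc : (n:ℝ) ^ ε ≤ (c:ℝ)) (hxa : (n:ℝ) ^ (1 - ε/4) ≤ (a:ℝ))
    (hbase : 3 * Real.exp 1 * (k:ℝ) ≤ 2 * (n:ℝ) ^ (ε/4)) :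
    (n.choose a : ℝ) * ((k:ℝ) * rr c) ^ a
      ≤ (3 * Real.exp 1 * (k:ℝ) / (2 * (n:ℝ) ^ (ε/4))) ^ ((n:ℝ) ^ (1 - ε/4)) := by
  have hn0 : (0:ℝ) < n := by exact_mod_cast Nat.lt_of_lt_of_le Nat.zero_lt_two hn2
  set x := (n:ℝ) ^ (1 - ε/4) with hxdef
  have hxpos : (0:ℝ) < x := Real.rpow_pos_of_pos hn0 _
  have hapos : (0:ℝ) < (a:ℝ) := lt_of_lt_of_le hxpos hxa
  have hane : (a:ℝ) ≠ 0 := ne_of_gt hapos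
  have hkpos : (0:ℝ) < (k:ℝ) := by exact_mod_cast hk1
  have hnepos : (0:ℝ) < (n:ℝ) ^ ε := Real.rpow_pos_of_pos hn0 _
  have hcpos : (0:ℝ) < (c:ℝ) := lt_of_lt_of_le hnepos hc
  have hrrpos : (0:ℝ) < rr c := Real.rpow_pos_of_pos hcpos _
  have hy : (0:ℝ) < (n:ℝ) ^ (ε/4) := Real.rpow_pos_of_pos hn0 _
  have hexp : (0:ℝ) < Real.exp 1 := Real.exp_pos 1
  -- rr c ≤ n ^ (-(ε/2))
  have hrc : rr c ≤ (n:ℝ) ^ (-(ε/2)) := by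
    have h1 : rr c ≤ ((n:ℝ) ^ ε) ^ (-(1:ℝ)/2) :=
      Real.rpow_le_rpow_of_nonpos hnepos hc (by norm_num)
    have h2 : ((n:ℝ) ^ ε) ^ (-(1:ℝ)/2) = (n:ℝ) ^ (-(ε/2)) := by
      rw [← Real.rpow_mul (le_of_lt hn0)]
      congr 1
      ring
    rw [← h2]; exact h1
  -- n/a ≤ n^(ε/4)
  have hna : (n:ℝ) / a ≤ (n:ℝ) ^ (ε/4) := by
    have h1 : (n:ℝ) / a ≤ (n:ℝ) / x := by
      apply div_le_div_of_nonneg_left (le_of_lt hn0) hxpos hxa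
    have h2 : (n:ℝ) ^ (ε/4) * x = n := by
      rw [hxdef, ← Real.rpow_add hn0]
      norm_num
    have h2' : (n:ℝ) / x = (n:ℝ) ^ (ε/4) := by
      rw [div_eq_iff (ne_of_gt hxpos)]
      exact h2.symm
    rw [← h2']; exact h1
  -- base positivity
  set b := 3 * Real.exp 1 * (k:ℝ) / (2 * (n:ℝ) ^ (ε/4)) with hbdef
  have hb0 : 0 < b := by
    apply div_pos (by positivity) (by positivity)
  have hb1 : b ≤ 1 := by
    rw [hbdef, div_le_one (by positivity)]
    exact hbase
  -- main pow chain
  have hchain : (n.choose a : ℝ) * ((k:ℝ) * rr c) ^ a ≤ b ^ a := by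
    have h1 : (n.choose a : ℝ) ≤ (n:ℝ) ^ a / (a.factorial : ℝ) :=
      Nat.choose_le_pow_div a n
    have h2 : (a:ℝ) ^ a / (a.factorial : ℝ) ≤ Real.exp 1 ^ a := by
      have h3 := Real.pow_div_factorial_le_exp (x := (a:ℝ)) (le_of_lt hapos) a
      rwa [← Real.exp_one_pow] at h3
    have hsplit : (n:ℝ) ^ a / (a.factorial : ℝ)
        = ((n:ℝ)/a) ^ a * ((a:ℝ) ^ a / (a.factorial : ℝ)) := by
      rw [div_pow, div_mul_div_comm, mul_comm ((n:ℝ)^a) ((a:ℝ)^a),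
        mul_div_mul_left _ _ (pow_ne_zero a hane)]
    have hfac : (0:ℝ) < (a.factorial : ℝ) := by exact_mod_cast a.factorial_pos
    calc (n.choose a : ℝ) * ((k:ℝ) * rr c) ^ a
        ≤ ((n:ℝ) ^ a / (a.factorial : ℝ)) * ((k:ℝ) * rr c) ^ a := by
          apply mul_le_mul_of_nonneg_right h1 (pow_nonneg (by positivity) _)
      _ = ((n:ℝ)/a) ^ a * ((a:ℝ) ^ a / (a.factorial : ℝ)) * ((k:ℝ) * rr c) ^ a := by
          rw [hsplit]
      _ ≤ ((n:ℝ)/a) ^ a * Real.exp 1 ^ a * ((k:ℝ) * rr c) ^ a := by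
          apply mul_le_mul_of_nonneg_right _ (pow_nonneg (by positivity) _)
          apply mul_le_mul_of_nonneg_left h2 (pow_nonneg (by positivity) _)
      _ = ((n:ℝ)/a * Real.exp 1 * ((k:ℝ) * rr c)) ^ a := by
          rw [mul_pow, mul_pow]
          ring
      _ ≤ b ^ a := by
          apply pow_le_pow_left₀ (by positivity)
          -- (n/a) * exp 1 * (k * rr c) ≤ b
          have hstep : (n:ℝ)/a * Real.exp 1 * ((k:ℝ) * rr c)
              ≤ (n:ℝ)^(ε/4) * Real.exp 1 * ((k:ℝ) * (n:ℝ) ^ (-(ε/2))) := by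
            apply mul_le_mul
            · apply mul_le_mul_of_nonneg_right hna (le_of_lt hexp)
            · apply mul_le_mul_of_nonneg_left hrc (le_of_lt hkpos)
            · positivity
            · positivity
          refine hstep.trans ?_
          have hmm : (n:ℝ)^(ε/4) * Real.exp 1 * ((k:ℝ) * (n:ℝ) ^ (-(ε/2)))
              = Real.exp 1 * (k:ℝ) * (n:ℝ) ^ (-(ε/4)) := by
            rw [show (-(ε/4) : ℝ) = ε/4 + -(ε/2) by ring, Real.rpow_add hn0]
            ring
          rw [hmm, hbdef]
          rw [Real.rpow_neg (le_of_lt hn0), show (3:ℝ) * Real.exp 1 * (k:ℝ) / (2 * (n:ℝ)^(ε/4)) = (3/2 * (Real.exp 1 * (k:ℝ))) * ((n:ℝ)^(ε/4))⁻¹ from by ring]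
          apply mul_le_mul_of_nonneg_right _ (by positivity)
          nlinarith [mul_pos hexp hkpos]
  refine hchain.trans ?_
  have hba : b ^ a = b ^ ((a:ℝ)) := (Real.rpow_natCast b a).symm
  rw [hba]
  exact Real.rpow_le_rpow_of_exponent_ge hb0 hb1 hxa

end Stmt18Aux

open Stmt18Aux in
theorem stmt18
    {Ω : Type*} [MeasurableSpace Ω] (μ : Measure Ω) [IsProbabilityMeasure μ]
    (U : ℕ → Ω → ℝ)
    (hUmeas : ∀ i, Measurable (U i))
    (hUindep : iIndepFun (fun i : ℕ => U (i + 1)) μ)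
    (hUunif : ∀ i : ℕ, 1 ≤ i →
      Measure.map (U i) μ = MeasureTheory.volume.restrict (Set.Icc (0:ℝ) 1))
    (ε : ℝ) (hε : ε ∈ Set.Ioo (0:ℝ) 1)
    -- the success times N n j after time n^ε, and the gap counts A n k
    (N : ℕ → ℕ → Ω → ℕ)
    (hN0 : ∀ n ω, N n 0 ω = ⌈(n:ℝ) ^ ε⌉₊)
    (hNs : ∀ n j ω, N n (j + 1) ω =
      sInf {m : ℕ | N n j ω < m ∧ U m ω ≤ (m:ℝ) ^ (-(1:ℝ)/2)})
    (A : ℕ → ℕ → Ω → ℕ)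
    (hA : ∀ n k ω, A n k ω =
      ((Finset.Icc 1 n).filter (fun j => N n j ω - N n (j - 1) ω ≤ k)).card) :
    (∃ n0 : ℕ, ∀ n : ℕ, n0 ≤ n →
      (μ {ω | (n:ℝ) ^ (1 - ε / 4) <
          (A n ⌈Real.log n ^ 2⌉₊ ω : ℝ)}).toReal
        ≤ (3 * Real.exp 1 * (⌈Real.log n ^ 2⌉₊ : ℝ) / (2 * (n:ℝ) ^ (ε / 4)))
            ^ ((n:ℝ) ^ (1 - ε / 4))) ∧
    Summable (fun n : ℕ =>
      (μ {ω | (n:ℝ) ^ (1 - ε / 4) < (A n ⌈Real.log n ^ 2⌉₊ ω : ℝ)}).toReal) := by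
  obtain ⟨hε0, hε1⟩ := hε
  -- eventual conditions
  have hEv1 : ∀ᶠ n : ℕ in atTop,
      3 * Real.exp 1 * (⌈Real.log n ^ 2⌉₊ : ℝ) ≤ 2 * (n:ℝ) ^ (ε/8) := by
    have hlo := isLittleO_log_rpow_rpow_atTop 2 (show (0:ℝ) < ε/8 by positivity)
    have h1 := hlo.def (show (0:ℝ) < 1/(3*Real.exp 1) by positivity)
    have h2 : ∀ᶠ x : ℝ in atTop, 3 * Real.exp 1 ≤ x ^ (ε/8) :=
      (tendsto_rpow_atTop (show (0:ℝ) < ε/8 by positivity)).eventually_ge_atTop _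
    have h3 : ∀ᶠ x : ℝ in atTop, (1:ℝ) ≤ x := eventually_ge_atTop 1
    have hcomb : ∀ᶠ x : ℝ in atTop,
        3 * Real.exp 1 * (⌈Real.log x ^ 2⌉₊ : ℝ) ≤ 2 * x ^ (ε/8) := by
      filter_upwards [h1, h2, h3] with x hx1 hx2 hx3
      have hlog0 : 0 ≤ Real.log x := Real.log_nonneg hx3
      have hxr0 : 0 ≤ x ^ (ε/8) := Real.rpow_nonneg (by linarith) _
      have hsq : Real.log x ^ (2:ℝ) = Real.log x ^ (2:ℕ) := by
        rw [show (2:ℝ) = ((2:ℕ):ℝ) by norm_num, Real.rpow_natCast]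
      rw [Real.norm_eq_abs, Real.norm_eq_abs, hsq] at hx1
      rw [abs_of_nonneg (by positivity), abs_of_nonneg hxr0] at hx1
      have hceil : (⌈Real.log x ^ 2⌉₊ : ℝ) < Real.log x ^ 2 + 1 :=
        Nat.ceil_lt_add_one (by positivity)
      have hexp : (0:ℝ) < Real.exp 1 := Real.exp_pos 1
      have hlog2 : 3 * Real.exp 1 * (Real.log x ^ 2) ≤ x ^ (ε/8) := by
        have h4 : Real.log x ^ 2 ≤ 1/(3*Real.exp 1) * x ^ (ε/8) := hx1
        calc 3 * Real.exp 1 * (Real.log x ^ 2)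
            ≤ 3 * Real.exp 1 * (1/(3*Real.exp 1) * x ^ (ε/8)) := by
              apply mul_le_mul_of_nonneg_left h4 (by positivity)
          _ = x ^ (ε/8) := by field_simp
      nlinarith
    exact tendsto_natCast_atTop_atTop.eventually hcomb
  have hEv2 : ∀ᶠ n : ℕ in atTop, (2:ℝ) ≤ (ε/8) * (n:ℝ) ^ (1-ε/4) := by
    have h1 : ∀ᶠ x : ℝ in atTop, 16/ε ≤ x ^ (1-ε/4) :=
      (tendsto_rpow_atTop (show (0:ℝ) < 1-ε/4 by linarith)).eventually_ge_atTop _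
    have h2 : ∀ᶠ x : ℝ in atTop, (2:ℝ) ≤ (ε/8) * x ^ (1-ε/4) := by
      filter_upwards [h1] with x hx
      have : (ε/8) * (16/ε) ≤ (ε/8) * x ^ (1-ε/4) :=
        mul_le_mul_of_nonneg_left hx (by positivity)
      have h16 : (ε/8) * (16/ε) = 2 := by field_simp; ring
      linarith
    exact tendsto_natCast_atTop_atTop.eventually h2
  have hEv0 : ∀ᶠ n : ℕ in atTop, 2 ≤ n := eventually_ge_atTop 2
  obtain ⟨n0, hn0⟩ := eventually_atTop.1 (hEv0.and (hEv1.and hEv2))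
  -- the main per-n real bound
  have hmain : ∀ n : ℕ, n0 ≤ n →
      (μ {ω | (n:ℝ) ^ (1 - ε / 4) < (A n ⌈Real.log n ^ 2⌉₊ ω : ℝ)}).toReal
        ≤ (3 * Real.exp 1 * (⌈Real.log n ^ 2⌉₊ : ℝ) / (2 * (n:ℝ) ^ (ε / 4)))
            ^ ((n:ℝ) ^ (1 - ε / 4)) := by
    intro n hn
    obtain ⟨hn2, hb8, hx2⟩ := hn0 n hn
    set c := ⌈(n:ℝ) ^ ε⌉₊ with hcdef
    set k := ⌈Real.log n ^ 2⌉₊ with hkdef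
    set x := (n:ℝ) ^ (1 - ε / 4) with hxdef
    set a := ⌊x⌋₊ + 1 with hadef
    have hn1r : (1:ℝ) ≤ (n:ℝ) := by exact_mod_cast Nat.one_le_of_lt hn2
    have hn0r : (0:ℝ) < (n:ℝ) := by linarith
    have hb4 : 3 * Real.exp 1 * (k:ℝ) ≤ 2 * (n:ℝ) ^ (ε/4) := by
      refine hb8.trans (mul_le_mul_of_nonneg_left ?_ (by norm_num))
      exact Real.rpow_le_rpow_of_exponent_le hn1r (by linarith)
    have hk1 : 1 ≤ k := by
      rw [hkdef]
      refine Nat.ceil_pos.2 ?_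
      have : 0 < Real.log n := Real.log_pos (by exact_mod_cast hn2)
      positivity
    have hrr0 : 0 ≤ rr c := Real.rpow_nonneg (Nat.cast_nonneg c) _
    have hb := perN μ U hUmeas hUindep hUunif N hN0 hNs A hA n hn2
    have hfin : ((n.choose a : ℝ≥0∞) *
        (((k:ℕ) : ℝ≥0∞) * ENNReal.ofReal (rr c)) ^ a) ≠ ⊤ := by
      apply ENNReal.mul_ne_top (ENNReal.natCast_ne_top _)
      apply ENNReal.pow_ne_top
      exact ENNReal.mul_ne_top (ENNReal.natCast_ne_top _) ENNReal.ofReal_ne_top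
    have htoReal : ((n.choose a : ℝ≥0∞) *
        (((k:ℕ) : ℝ≥0∞) * ENNReal.ofReal (rr c)) ^ a).toReal
          = (n.choose a : ℝ) * ((k:ℝ) * rr c) ^ a := by
      rw [ENNReal.toReal_mul, ENNReal.toReal_pow, ENNReal.toReal_mul,
        ENNReal.toReal_natCast, ENNReal.toReal_natCast, ENNReal.toReal_ofReal hrr0]
    have h1 : (μ {ω | x < (A n k ω : ℝ)}).toReal
        ≤ (n.choose a : ℝ) * ((k:ℝ) * rr c) ^ a := by
      rw [← htoReal]
      exact ENNReal.toReal_mono hfin hb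
    refine h1.trans ?_
    refine realchain hε0 hn2 hk1 (Nat.le_ceil _) ?_ hb4
    have := Nat.lt_floor_add_one x
    rw [hadef]
    push_cast
    linarith
  refine ⟨⟨n0, hmain⟩, ?_⟩
  -- summability
  have hg : Summable (fun n : ℕ => (n:ℝ) ^ (-2:ℝ)) :=
    Real.summable_nat_rpow.2 (by norm_num)
  refine summable_of_isBigO_nat hg ?_
  rw [Asymptotics.isBigO_iff]
  refine ⟨1, ?_⟩
  rw [eventually_atTop]
  refine ⟨max n0 1, fun n hn => ?_⟩
  have hn0' : n0 ≤ n := le_trans (le_max_left _ _) hn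
  have hn1 : 1 ≤ n := le_trans (le_max_right _ _) hn
  obtain ⟨hn2, hb8, hx2⟩ := hn0 n hn0'
  have hn1r : (1:ℝ) ≤ (n:ℝ) := by exact_mod_cast Nat.one_le_of_lt hn2
  have hn0r : (0:ℝ) < (n:ℝ) := by linarith
  set k := ⌈Real.log n ^ 2⌉₊ with hkdef
  set x := (n:ℝ) ^ (1 - ε / 4) with hxdef
  set b := 3 * Real.exp 1 * (k:ℝ) / (2 * (n:ℝ) ^ (ε / 4)) with hbdef
  have hterm := hmain n hn0'
  have hxpos : (0:ℝ) ≤ x := Real.rpow_nonneg (le_of_lt hn0r) _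
  have hy4 : (0:ℝ) < (n:ℝ) ^ (ε/4) := Real.rpow_pos_of_pos hn0r _
  have hb0 : 0 ≤ b := by
    rw [hbdef]
    positivity
  have hbn : b ≤ (n:ℝ) ^ (-(ε/8)) := by
    rw [hbdef, div_le_iff₀ (by positivity)]
    have hmul : (n:ℝ) ^ (-(ε/8)) * (2 * (n:ℝ) ^ (ε/4)) = 2 * (n:ℝ) ^ (ε/8) := by
      rw [show (ε/8 : ℝ) = -(ε/8) + ε/4 by ring, Real.rpow_add hn0r]
      ring
    rw [hmul]
    exact hb8
  have hpow : b ^ x ≤ (n:ℝ) ^ (-2:ℝ) := by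
    have h1 : b ^ x ≤ ((n:ℝ) ^ (-(ε/8))) ^ x :=
      Real.rpow_le_rpow hb0 hbn hxpos
    have h2 : ((n:ℝ) ^ (-(ε/8))) ^ x = (n:ℝ) ^ ((-(ε/8)) * x) :=
      (Real.rpow_mul (le_of_lt hn0r) _ _).symm
    have h3 : (n:ℝ) ^ ((-(ε/8)) * x) ≤ (n:ℝ) ^ (-2:ℝ) := by
      apply Real.rpow_le_rpow_of_exponent_le hn1r
      nlinarith
    calc b ^ x ≤ ((n:ℝ) ^ (-(ε/8))) ^ x := h1
      _ = (n:ℝ) ^ ((-(ε/8)) * x) := h2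
      _ ≤ (n:ℝ) ^ (-2:ℝ) := h3
  have htnn : 0 ≤ (μ {ω | x < (A n k ω : ℝ)}).toReal := ENNReal.toReal_nonneg
  rw [Real.norm_eq_abs, Real.norm_eq_abs, abs_of_nonneg htnn,
    abs_of_nonneg (Real.rpow_nonneg (le_of_lt hn0r) _), one_mul]
  exact hterm.trans hpow
end
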